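/- Let (D_cf, C_cf) be any cut-free cycle-normal CLKID^ω_a proof of the sequent Add2(x,y,z) ⊢ Add1(x,y,z) and let Γ ⊢ Δ be any sequent occurring in D_cf. Let A(Γ ⊢ Δ) be the set of terms a such that Add2(a,b,c) ∈ Γ, or Add1(a,b,c) ∈ Δ, or a = 0, and let BC(Γ ⊢ Δ) be the set of second and third arguments b, c of atoms Add2(a,b,c) ∈ Γ or Add1(a,b,c) ∈ Δ. Then t ∈ A(Γ ⊢ Δ) and u ∈ BC(Γ ⊢ Δ) imply t !~_Γ u. -/

import Mathlib

namespace CLKID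

/-- Terms of the language: variables, the constant `0`, and the unary function `s`. -/
inductive Tm : Type where
  | var : ℕ → Tm
  | zero : Tm
  | s : Tm → Tm
deriving DecidableEq

/-- `sIter n t` is the term `s^n t`. -/
def sIter : ℕ → Tm → Tm
  | 0, t => t
  | n + 1, t => Tm.s (sIter n t)

/-- Substitution on terms. -/
def Tm.subst (θ : ℕ → Tm) : Tm → Tm
  | .var x => θ x
  | .zero => .zero
  | .s t => .s (t.subst θ)

/-- Free variables of a term. -/
def Tm.fv : Tm → Set ℕ
  | .var x => {x}
  | .zero => ∅
  | .s t => t.fv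

/-- Subterms of a term. -/
def Tm.sub : Tm → Set Tm
  | .var x => {Tm.var x}
  | .zero => {Tm.zero}
  | .s t => insert (Tm.s t) t.sub

/-- The variable of a term (`none` if the term is of the form `s^n 0`). -/
def Tm.varOf : Tm → Option ℕ
  | .var x => some x
  | .zero => none
  | .s t => t.varOf

/-- Formulas: equations, the two inductive-predicate atoms `Add1`/`Add2`,
    and the usual first-order connectives and quantifiers. -/
inductive Fm : Type where
  | eq : Tm → Tm → Fm
  | add1 : Tm → Tm → Tm → Fm
  | add2 : Tm → Tm → Tm → Fm
  | not : Fm → Fm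
  | and : Fm → Fm → Fm
  | or : Fm → Fm → Fm
  | imp : Fm → Fm → Fm
  | all : ℕ → Fm → Fm
  | ex : ℕ → Fm → Fm
deriving DecidableEq

/-- Substitution on formulas. -/
def Fm.subst (θ : ℕ → Tm) : Fm → Fm
  | .eq t u => .eq (t.subst θ) (u.subst θ)
  | .add1 a b c => .add1 (a.subst θ) (b.subst θ) (c.subst θ)
  | .add2 a b c => .add2 (a.subst θ) (b.subst θ) (c.subst θ)
  | .not φ => .not (φ.subst θ)
  | .and φ ψ => .and (φ.subst θ) (ψ.subst θ)
  | .or φ ψ => .or (φ.subst θ) (ψ.subst θ)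
  | .imp φ ψ => .imp (φ.subst θ) (ψ.subst θ)
  | .all x φ => .all x (φ.subst (Function.update θ x (Tm.var x)))
  | .ex x φ => .ex x (φ.subst (Function.update θ x (Tm.var x)))

/-- Free variables of a formula. -/
def Fm.fv : Fm → Set ℕ
  | .eq t u => t.fv ∪ u.fv
  | .add1 a b c => a.fv ∪ b.fv ∪ c.fv
  | .add2 a b c => a.fv ∪ b.fv ∪ c.fv
  | .not φ => φ.fv
  | .and φ ψ => φ.fv ∪ ψ.fv
  | .or φ ψ => φ.fv ∪ ψ.fv
  | .imp φ ψ => φ.fv ∪ ψ.fv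
  | .all x φ => φ.fv \ {x}
  | .ex x φ => φ.fv \ {x}

/-- Terms occurring in a formula. -/
def Fm.tms : Fm → Set Tm
  | .eq t u => t.sub ∪ u.sub
  | .add1 a b c => a.sub ∪ b.sub ∪ c.sub
  | .add2 a b c => a.sub ∪ b.sub ∪ c.sub
  | .not φ => φ.tms
  | .and φ ψ => φ.tms ∪ ψ.tms
  | .or φ ψ => φ.tms ∪ ψ.tms
  | .imp φ ψ => φ.tms ∪ ψ.tms
  | .all _ φ => φ.tms
  | .ex _ φ => φ.tms

/-- The substitution `[x := t]`. -/
def sub1 (x : ℕ) (t : Tm) : ℕ → Tm := fun y => if y = x then t else Tm.var y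

/-- The simultaneous substitution `[v1 := t, v2 := u]`. -/
def sub2 (v1 v2 : ℕ) (t u : Tm) : ℕ → Tm :=
  fun z => if z = v1 then t else if z = v2 then u else Tm.var z

/-- `≡_Γ`: the smallest congruence relation on terms containing all pairs `(t, u)`
    with the equation `t = u` in `Γ`. -/
inductive EqvTm (Γ : Set Fm) : Tm → Tm → Prop where
  | base {t u : Tm} : Fm.eq t u ∈ Γ → EqvTm Γ t u
  | refl (t : Tm) : EqvTm Γ t t
  | symm {t u : Tm} : EqvTm Γ t u → EqvTm Γ u t
  | trans {t u v : Tm} : EqvTm Γ t u → EqvTm Γ u v → EqvTm Γ t v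
  | sCongr {t u : Tm} : EqvTm Γ t u → EqvTm Γ (Tm.s t) (Tm.s u)

/-- `t ~_Γ u` : `s^n t ≡_Γ s^m u` for some naturals `n`, `m`. -/
def DepTm (Γ : Set Fm) (t u : Tm) : Prop := ∃ n m : ℕ, EqvTm Γ (sIter n t) (sIter m u)

/-- A sequent: a pair of finite sets of formulas. -/
structure Seq where
  ant : Finset Fm
  suc : Finset Fm

/-- The antecedent of a sequent, as a set of formulas. -/
def antSet (S : Seq) : Set Fm := ↑S.ant

/-- `[Γ]` from Lemma on chains: `{ s^n t1 = s^n t2 | t1 = t2 ∈ Γ or t2 = t1 ∈ Γ }`. -/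
def brkt (Γ : Set Fm) : Set Fm :=
  {φ | ∃ (n : ℕ) (t1 t2 : Tm), φ = Fm.eq (sIter n t1) (sIter n t2) ∧
        (Fm.eq t1 t2 ∈ Γ ∨ Fm.eq t2 t1 ∈ Γ)}

/-- `B1(Γ ⊢ Δ)` : second arguments of `Add1` atoms in the consequent. -/
def B1 (S : Seq) : Set Tm := {b | ∃ a c, Fm.add1 a b c ∈ S.suc}

/-- `C(Γ ⊢ Δ)` : third arguments of `Add2` atoms in the antecedent
    or `Add1` atoms in the consequent. -/
def Cset (S : Seq) : Set Tm :=
  {c | (∃ a b, Fm.add2 a b c ∈ S.ant) ∨ (∃ a b, Fm.add1 a b c ∈ S.suc)}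

/-- Index sequent. -/
def IndexSequent (S : Seq) : Prop :=
  (∀ t ∈ B1 S, ∀ u ∈ Cset S, ¬ DepTm (antSet S) t u) ∧
  (∀ b ∈ B1 S, ∀ b' ∈ B1 S, ∀ n m : ℕ, EqvTm (antSet S) (sIter n b) (sIter m b') → n = m)

/-! ## The cyclic proof systems `CLKID^ω` and `CLKID^ω_a` -/

/-- Rule labels; each label carries the instance data needed to describe the
    rule application (principal formulas, substitutions, case variables, ...).
    `bud` labels bud leaves of cyclic derivation trees. -/
inductive Rule : Type where
  | ax
  | weak
  | cut (φ : Fm)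
  | subst (θ : ℕ → Tm)
  | negL (φ : Fm)
  | negR (φ : Fm)
  | andL (φ ψ : Fm)
  | andR (φ ψ : Fm)
  | orL (φ ψ : Fm)
  | orR (φ ψ : Fm)
  | impL (φ ψ : Fm)
  | impR (φ ψ : Fm)
  | allL (x : ℕ) (t : Tm) (φ : Fm)
  | allR (x : ℕ) (φ : Fm)
  | exL (x : ℕ) (φ : Fm)
  | exR (x : ℕ) (t : Tm) (φ : Fm)
  | eqR (t : Tm)
  | eqL (v1 v2 : ℕ) (t u : Tm)
  | eqLa (v1 v2 : ℕ) (t u : Tm)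
  | add1R1
  | add1R2 (a b c : Tm)
  | add2R1
  | add2R2 (a b c : Tm)
  | caseAdd1 (a b c : Tm) (x y z : ℕ)
  | caseAdd2 (a b c : Tm) (x y z : ℕ)
  | bud

/-- `Inf r S L` : the sequent `S` follows from the list of premises `L`
    by the rule (instance) `r`. -/
inductive Inf : Rule → Seq → List Seq → Prop where
  | ax {Γ Δ : Finset Fm} :
      (Γ ∩ Δ).Nonempty → Inf .ax ⟨Γ, Δ⟩ []
  | weak {Γ Δ Γ' Δ' : Finset Fm} :
      Γ' ⊆ Γ → Δ' ⊆ Δ → Inf .weak ⟨Γ, Δ⟩ [⟨Γ', Δ'⟩]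
  | cut {Γ Δ : Finset Fm} {φ : Fm} :
      Inf (.cut φ) ⟨Γ, Δ⟩ [⟨Γ, insert φ Δ⟩, ⟨insert φ Γ, Δ⟩]
  | subst {Γ Δ : Finset Fm} {θ : ℕ → Tm} :
      Inf (.subst θ) ⟨Γ.image (Fm.subst θ), Δ.image (Fm.subst θ)⟩ [⟨Γ, Δ⟩]
  | negL {Γ Δ : Finset Fm} {φ : Fm} :
      Inf (.negL φ) ⟨insert (.not φ) Γ, Δ⟩ [⟨Γ, insert φ Δ⟩]
  | negR {Γ Δ : Finset Fm} {φ : Fm} :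
      Inf (.negR φ) ⟨Γ, insert (.not φ) Δ⟩ [⟨insert φ Γ, Δ⟩]
  | andL {Γ Δ : Finset Fm} {φ ψ : Fm} :
      Inf (.andL φ ψ) ⟨insert (.and φ ψ) Γ, Δ⟩ [⟨insert φ (insert ψ Γ), Δ⟩]
  | andR {Γ Δ : Finset Fm} {φ ψ : Fm} :
      Inf (.andR φ ψ) ⟨Γ, insert (.and φ ψ) Δ⟩ [⟨Γ, insert φ Δ⟩, ⟨Γ, insert ψ Δ⟩]
  | orL {Γ Δ : Finset Fm} {φ ψ : Fm} :
      Inf (.orL φ ψ) ⟨insert (.or φ ψ) Γ, Δ⟩ [⟨insert φ Γ, Δ⟩, ⟨insert ψ Γ, Δ⟩]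
  | orR {Γ Δ : Finset Fm} {φ ψ : Fm} :
      Inf (.orR φ ψ) ⟨Γ, insert (.or φ ψ) Δ⟩ [⟨Γ, insert φ (insert ψ Δ)⟩]
  | impL {Γ Δ : Finset Fm} {φ ψ : Fm} :
      Inf (.impL φ ψ) ⟨insert (.imp φ ψ) Γ, Δ⟩ [⟨Γ, insert φ Δ⟩, ⟨insert ψ Γ, Δ⟩]
  | impR {Γ Δ : Finset Fm} {φ ψ : Fm} :
      Inf (.impR φ ψ) ⟨Γ, insert (.imp φ ψ) Δ⟩ [⟨insert φ Γ, insert ψ Δ⟩]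
  | allL {Γ Δ : Finset Fm} {x : ℕ} {t : Tm} {φ : Fm} :
      Inf (.allL x t φ) ⟨insert (.all x φ) Γ, Δ⟩ [⟨insert (φ.subst (sub1 x t)) Γ, Δ⟩]
  | allR {Γ Δ : Finset Fm} {x : ℕ} {φ : Fm} :
      (∀ ψ ∈ Γ ∪ Δ, x ∉ Fm.fv ψ) →
      Inf (.allR x φ) ⟨Γ, insert (.all x φ) Δ⟩ [⟨Γ, insert φ Δ⟩]
  | exL {Γ Δ : Finset Fm} {x : ℕ} {φ : Fm} :
      (∀ ψ ∈ Γ ∪ Δ, x ∉ Fm.fv ψ) →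
      Inf (.exL x φ) ⟨insert (.ex x φ) Γ, Δ⟩ [⟨insert φ Γ, Δ⟩]
  | exR {Γ Δ : Finset Fm} {x : ℕ} {t : Tm} {φ : Fm} :
      Inf (.exR x t φ) ⟨Γ, insert (.ex x φ) Δ⟩ [⟨Γ, insert (φ.subst (sub1 x t)) Δ⟩]
  | eqR {Γ Δ : Finset Fm} {t : Tm} :
      Inf (.eqR t) ⟨Γ, insert (.eq t t) Δ⟩ []
  | eqL {Γ Δ : Finset Fm} {v1 v2 : ℕ} {t u : Tm} :
      Inf (.eqL v1 v2 t u)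
        ⟨insert (.eq t u) (Γ.image (Fm.subst (sub2 v1 v2 t u))),
          Δ.image (Fm.subst (sub2 v1 v2 t u))⟩
        [⟨Γ.image (Fm.subst (sub2 v1 v2 u t)), Δ.image (Fm.subst (sub2 v1 v2 u t))⟩]
  | eqLa {Γ Δ : Finset Fm} {v1 v2 : ℕ} {t u : Tm} :
      Inf (.eqLa v1 v2 t u)
        ⟨insert (.eq t u) (Γ.image (Fm.subst (sub2 v1 v2 t u))),
          Δ.image (Fm.subst (sub2 v1 v2 t u))⟩
        [⟨insert (.eq t u) (Γ.image (Fm.subst (sub2 v1 v2 u t))),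
          Δ.image (Fm.subst (sub2 v1 v2 u t))⟩]
  | add1R1 {Γ Δ : Finset Fm} {b : Tm} :
      Inf .add1R1 ⟨Γ, insert (.add1 .zero b b) Δ⟩ []
  | add1R2 {Γ Δ : Finset Fm} {a b c : Tm} :
      Inf (.add1R2 a b c) ⟨Γ, insert (.add1 (.s a) b (.s c)) Δ⟩ [⟨Γ, insert (.add1 a b c) Δ⟩]
  | add2R1 {Γ Δ : Finset Fm} {b : Tm} :
      Inf .add2R1 ⟨Γ, insert (.add2 .zero b b) Δ⟩ []
  | add2R2 {Γ Δ : Finset Fm} {a b c : Tm} :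
      Inf (.add2R2 a b c) ⟨Γ, insert (.add2 (.s a) b c) Δ⟩ [⟨Γ, insert (.add2 a (.s b) c) Δ⟩]
  | caseAdd1 {Γ Δ : Finset Fm} {a b c : Tm} {x y z : ℕ} :
      x ≠ y → x ≠ z → y ≠ z →
      (∀ ψ ∈ insert (Fm.add1 a b c) (Γ ∪ Δ), x ∉ Fm.fv ψ ∧ y ∉ Fm.fv ψ ∧ z ∉ Fm.fv ψ) →
      Inf (.caseAdd1 a b c x y z) ⟨insert (.add1 a b c) Γ, Δ⟩
        [⟨insert (.eq a .zero) (insert (.eq b (.var y)) (insert (.eq c (.var y)) Γ)), Δ⟩,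
         ⟨insert (.eq a (.s (.var x))) (insert (.eq b (.var y)) (insert (.eq c (.s (.var z)))
            (insert (.add1 (.var x) (.var y) (.var z)) Γ))), Δ⟩]
  | caseAdd2 {Γ Δ : Finset Fm} {a b c : Tm} {x y z : ℕ} :
      x ≠ y → x ≠ z → y ≠ z →
      (∀ ψ ∈ insert (Fm.add2 a b c) (Γ ∪ Δ), x ∉ Fm.fv ψ ∧ y ∉ Fm.fv ψ ∧ z ∉ Fm.fv ψ) →
      Inf (.caseAdd2 a b c x y z) ⟨insert (.add2 a b c) Γ, Δ⟩
        [⟨insert (.eq a .zero) (insert (.eq b (.var y)) (insert (.eq c (.var y)) Γ)), Δ⟩,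
         ⟨insert (.eq a (.s (.var x))) (insert (.eq b (.var y)) (insert (.eq c (.var z))
            (insert (.add2 (.var x) (.s (.var y)) (.var z)) Γ))), Δ⟩]

/-- A labeling of tree nodes (finite sequences of naturals) by sequents and rules;
    `none` means the node is not in the tree. -/
abbrev Lbl : Type := List ℕ → Option (Seq × Rule)

/-- The children of `σ` are labeled exactly by the premise list `prems`. -/
def childrenOK (f : Lbl) (σ : List ℕ) (prems : List Seq) : Prop :=
  (∀ i : Fin prems.length, ∃ r', f (σ ++ [(i : ℕ)]) = some (prems.get i, r')) ∧
  (∀ i : ℕ, prems.length ≤ i → f (σ ++ [i]) = none)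

/-- Derivation trees (possibly infinite): prefix-closed domain, each non-bud node
    is the conclusion of a rule whose premises label its children, buds are leaves. -/
structure DTree where
  label : Lbl
  root_def : label [] ≠ none
  prefix_closed : ∀ σ τ : List ℕ, label (σ ++ τ) ≠ none → label σ ≠ none
  wf : ∀ σ S r, label σ = some (S, r) →
    (r = Rule.bud ∧ ∀ i : ℕ, label (σ ++ [i]) = none) ∨
    (r ≠ Rule.bud ∧ ∃ prems, Inf r S prems ∧ childrenOK label σ prems)

/-- `σ` is a bud of the labeling `f`. -/
def budAt (f : Lbl) (σ : List ℕ) : Prop := ∃ S, f σ = some (S, Rule.bud)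

/-- `σ` is an inner node of `f` labeled with the sequent `S`. -/
def innerWith (f : Lbl) (σ : List ℕ) (S : Seq) : Prop :=
  ∃ r, f σ = some (S, r) ∧ r ≠ Rule.bud

/-- A pre-proof: a finite derivation tree together with a function assigning to
    each bud a companion, i.e. an inner node labeled with the same sequent. -/
structure PreProof where
  D : DTree
  fin : {σ : List ℕ | D.label σ ≠ none}.Finite
  C : List ℕ → List ℕ
  comp : ∀ σ S, D.label σ = some (S, Rule.bud) → innerWith D.label (C σ) S

/-- Cycle-normality: every companion is an ancestor of its bud. -/
def PreProof.CycleNormal (P : PreProof) : Prop :=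
  ∀ σ S, P.D.label σ = some (S, Rule.bud) → P.C σ <+: σ

/-- `T` is the tree-unfolding of the pre-proof `P`: it agrees with `P.D` on
    non-bud nodes, below a bud it continues as below the bud's companion, and it
    is empty on nodes not in `P.D` having no bud prefix. -/
def IsUnfolding (P : PreProof) (T : Lbl) : Prop :=
  (∀ σ, P.D.label σ ≠ none → ¬ budAt P.D.label σ → T σ = P.D.label σ) ∧
  (∀ σ₁ σ₂ : List ℕ, budAt P.D.label σ₁ → T (σ₁ ++ σ₂) = T (P.C σ₁ ++ σ₂)) ∧
  (∀ σ, P.D.label σ = none → (∀ σ₁, σ₁ <+: σ → ¬ budAt P.D.label σ₁) → T σ = none)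

/-- An infinite path in the labeling `f`. -/
def IsInfPath (f : Lbl) (p : ℕ → List ℕ) : Prop :=
  (∀ i, f (p i) ≠ none) ∧ (∀ i, ∃ n : ℕ, p (i + 1) = p i ++ [n])

/-- Atomic formulas with an inductive predicate. -/
def isIndAtom (φ : Fm) : Prop :=
  (∃ a b c, φ = Fm.add1 a b c) ∨ (∃ a b c, φ = Fm.add2 a b c)

/-- A progressing trace step: the traced formula is the principal formula of a
    case rule and its successor (in the corresponding case distinction, child `j`)
    is a case-descendant. -/
def progStep : Rule → ℕ → Fm → Fm → Prop := fun r j τ τ' =>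
  match r with
  | .caseAdd1 a b c x y z =>
      τ = Fm.add1 a b c ∧ j = 1 ∧ τ' = Fm.add1 (.var x) (.var y) (.var z)
  | .caseAdd2 a b c x y z =>
      τ = Fm.add2 a b c ∧ j = 1 ∧ τ' = Fm.add2 (.var x) (.s (.var y)) (.var z)
  | _ => False

/-- The trace connection relation between the traced formula at a conclusion of a
    rule `r` and the traced formula at its `j`-th premise. -/
def connStep : Rule → ℕ → Fm → Fm → Prop := fun r j τ τ' =>
  match r with
  | .subst θ => τ = Fm.subst θ τ'
  | .eqL v1 v2 t u =>
      ∃ F : Fm, τ = Fm.subst (sub2 v1 v2 t u) F ∧ τ' = Fm.subst (sub2 v1 v2 u t) F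
  | .eqLa v1 v2 t u =>
      ∃ F : Fm, τ = Fm.subst (sub2 v1 v2 t u) F ∧ τ' = Fm.subst (sub2 v1 v2 u t) F
  | .caseAdd1 a b c x y z => τ' = τ ∨ progStep (.caseAdd1 a b c x y z) j τ τ'
  | .caseAdd2 a b c x y z => τ' = τ ∨ progStep (.caseAdd2 a b c x y z) j τ τ'
  | _ => τ' = τ

/-- `τ` is a trace following the tail from `k` of the path `p` in `f`. -/
def IsTraceFrom (f : Lbl) (p : ℕ → List ℕ) (k : ℕ) (τ : ℕ → Fm) : Prop :=
  ∀ i, k ≤ i →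
    ∃ (S : Seq) (r : Rule) (j : ℕ), f (p i) = some (S, r) ∧ τ i ∈ S.ant ∧ isIndAtom (τ i) ∧
      p (i + 1) = p i ++ [j] ∧ connStep r j (τ i) (τ (i + 1))

/-- The trace `τ` progresses at position `i` of the path `p`. -/
def progAt (f : Lbl) (p : ℕ → List ℕ) (τ : ℕ → Fm) (i : ℕ) : Prop :=
  ∃ (S : Seq) (r : Rule) (j : ℕ), f (p i) = some (S, r) ∧ p (i + 1) = p i ++ [j] ∧
    progStep r j (τ i) (τ (i + 1))

/-- The global trace condition for a (possibly infinite) labeling `f`. -/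
def GTC (f : Lbl) : Prop :=
  ∀ p : ℕ → List ℕ, IsInfPath f p →
    ∃ (k : ℕ) (τ : ℕ → Fm), IsTraceFrom f p k τ ∧
      ∀ n : ℕ, ∃ i, n ≤ i ∧ k ≤ i ∧ progAt f p τ i

/-- A pre-proof is a proof when its tree-unfolding satisfies the
    global trace condition. -/
def PreProof.IsProof (P : PreProof) : Prop := ∃ T : Lbl, IsUnfolding P T ∧ GTC T

/-- Some rule satisfying `Q` occurs in the labeling `f`. -/
def usesRule (f : Lbl) (Q : Rule → Prop) : Prop := ∃ σ S r, f σ = some (S, r) ∧ Q r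

/-- No occurrence of (Cut). -/
def PreProof.CutFree (P : PreProof) : Prop :=
  ¬ usesRule P.D.label (fun r => ∃ φ, r = Rule.cut φ)

/-- No occurrence of (= L_a): the pre-proof is a `CLKID^ω` pre-proof. -/
def PreProof.NoEqLa (P : PreProof) : Prop :=
  ¬ usesRule P.D.label (fun r => ∃ v1 v2 t u, r = Rule.eqLa v1 v2 t u)

/-- No occurrence of (= L): the pre-proof is a `CLKID^ω_a` pre-proof. -/
def PreProof.NoEqL (P : PreProof) : Prop :=
  ¬ usesRule P.D.label (fun r => ∃ v1 v2 t u, r = Rule.eqL v1 v2 t u)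

/-- The conclusion of the pre-proof is the sequent `S`. -/
def PreProof.Concl (P : PreProof) (S : Seq) : Prop := ∃ r, P.D.label [] = some (S, r)

/-- Provability in `CLKID^ω`. -/
def ProvableW (S : Seq) : Prop :=
  ∃ P : PreProof, P.IsProof ∧ P.NoEqLa ∧ P.Concl S

/-- Provability in `CLKID^ω_a`. -/
def ProvableWa (S : Seq) : Prop :=
  ∃ P : PreProof, P.IsProof ∧ P.NoEqL ∧ P.Concl S

/-- Cut-free provability in `CLKID^ω`. -/
def CutFreeProvableW (S : Seq) : Prop :=
  ∃ P : PreProof, P.IsProof ∧ P.CutFree ∧ P.NoEqLa ∧ P.Concl S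

/-- The sequent `Add2(x, y, z) ⊢ Add1(x, y, z)`. -/
def goalSeq : Seq :=
  ⟨{Fm.add2 (Tm.var 0) (Tm.var 1) (Tm.var 2)}, {Fm.add1 (Tm.var 0) (Tm.var 1) (Tm.var 2)}⟩

/-- A cut-free cycle-normal `CLKID^ω_a` proof of `Add2(x,y,z) ⊢ Add1(x,y,z)`. -/
def IsCNProofOfGoal (P : PreProof) : Prop :=
  P.IsProof ∧ P.CutFree ∧ P.NoEqL ∧ P.CycleNormal ∧ P.Concl goalSeq

/-- The index of an `Add2` atom with second argument `b` in the sequent `S` is `⊥`. -/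
def IndexBot (S : Seq) (b : Tm) : Prop :=
  ∀ a' b' c', Fm.add1 a' b' c' ∈ S.suc → ¬ DepTm (antSet S) b b'

/-- `σ` is a switching point of `f`: the conclusion of a `(Case Add2)` rule whose
    principal formula has index `⊥`. -/
def SwitchingPoint (f : Lbl) (σ : List ℕ) : Prop :=
  ∃ S a b c x y z, f σ = some (S, Rule.caseAdd2 a b c x y z) ∧ IndexBot S b

/-- `σ` is the conclusion of a `(Case Add2)` rule in `f`. -/
def CaseAdd2At (f : Lbl) (σ : List ℕ) : Prop :=
  ∃ S a b c x y z, f σ = some (S, Rule.caseAdd2 a b c x y z)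

/-- The node `σ` of `f` is labeled with an index sequent. -/
def IndexSequentAt (f : Lbl) (σ : List ℕ) : Prop :=
  ∃ S r, f σ = some (S, r) ∧ IndexSequent S

/-- A finite index path `p 0, …, p N` in `f`:  its first sequent is an index
    sequent, and a step to the left premise (child `0`) of a `(Case Add2)` rule
    only happens at switching points. -/
def IsIndexPathUpTo (f : Lbl) (p : ℕ → List ℕ) (N : ℕ) : Prop :=
  (∀ i, i ≤ N → f (p i) ≠ none) ∧
  (∀ i, i < N → ∃ n : ℕ, p (i + 1) = p i ++ [n]) ∧
  IndexSequentAt f (p 0) ∧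
  (∀ i, i < N → CaseAdd2At f (p i) → p (i + 1) = p i ++ [0] → SwitchingPoint f (p i))

/-- An infinite index path in `f`. -/
def IsInfIndexPath (f : Lbl) (p : ℕ → List ℕ) : Prop :=
  IsInfPath f p ∧
  IndexSequentAt f (p 0) ∧
  (∀ i, CaseAdd2At f (p i) → p (i + 1) = p i ++ [0] → SwitchingPoint f (p i))

/-- The child index chosen by the rightmost path: the right assumption of
    `(Case Add2)`, the unique premise otherwise. -/
def rightIdx : Rule → ℕ := fun r =>
  match r with
  | .caseAdd2 _ _ _ _ _ _ => 1
  | _ => 0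

/-- One step of the rightmost path in `f`. -/
def RightStep (f : Lbl) (σ σ' : List ℕ) : Prop :=
  ∃ S r, f σ = some (S, r) ∧ σ' = σ ++ [rightIdx r] ∧ f σ' ≠ none

/-- `A(Γ ⊢ Δ)` of Lemma `abc_relations`. -/
def Aset (S : Seq) : Set Tm :=
  {a | (∃ b c, Fm.add2 a b c ∈ S.ant) ∨ (∃ b c, Fm.add1 a b c ∈ S.suc) ∨ a = Tm.zero}

/-- `BC(Γ ⊢ Δ)` of Lemma `abc_relations`. -/
def BCset (S : Seq) : Set Tm :=
  {t | (∃ a c, Fm.add2 a t c ∈ S.ant) ∨ (∃ a b, Fm.add2 a b t ∈ S.ant) ∨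
       (∃ a c, Fm.add1 a t c ∈ S.suc) ∨ (∃ a b, Fm.add1 a b t ∈ S.suc)}

/-- The rules that can occur in a cut-free cycle-normal `CLKID^ω_a` proof of
    `Add2(x,y,z) ⊢ Add1(x,y,z)` (plus bud labels). -/
def allowedRule (r : Rule) : Prop :=
  r = Rule.bud ∨ r = Rule.weak ∨ (∃ θ, r = Rule.subst θ) ∨
  (∃ v1 v2 t u, r = Rule.eqLa v1 v2 t u) ∨
  (∃ a b c x y z, r = Rule.caseAdd2 a b c x y z) ∨
  r = Rule.add1R1 ∨ (∃ a b c, r = Rule.add1R2 a b c)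

/-! ### Auxiliary lemmas for `abc_relations` -/

lemma sIter_s (n : ℕ) (t : Tm) : sIter n (Tm.s t) = Tm.s (sIter n t) := by
  induction n with
  | zero => rfl
  | succ n ih => simp [sIter, ih]

lemma sIter_add (n m : ℕ) (t : Tm) : sIter n (sIter m t) = sIter (n + m) t := by
  induction n with
  | zero => simp [sIter]
  | succ n ih => simp only [sIter, ih]; rw [Nat.add_right_comm]; rfl

lemma fv_sIter (n : ℕ) (t : Tm) : (sIter n t).fv = t.fv := by
  induction n with
  | zero => rfl
  | succ n ih => simpa [sIter, Tm.fv] using ih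

lemma subst_sIter (θ : ℕ → Tm) (n : ℕ) (t : Tm) :
    (sIter n t).subst θ = sIter n (t.subst θ) := by
  induction n with
  | zero => rfl
  | succ n ih => simp [sIter, Tm.subst, ih]

lemma varOf_sIter (n : ℕ) (t : Tm) : (sIter n t).varOf = t.varOf := by
  induction n with
  | zero => rfl
  | succ n ih => simpa [sIter, Tm.varOf] using ih

lemma sIter_var_eq {m n : ℕ} {v : Tm} {y : ℕ} (h : sIter m v = sIter n (Tm.var y)) :
    y ∈ v.fv := by
  induction n generalizing m with
  | zero =>
    cases m with
    | zero => simp only [sIter] at h; subst h; simp [Tm.fv]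
    | succ m => simp only [sIter] at h; cases h
  | succ n ih =>
    cases m with
    | zero =>
      simp only [sIter] at h
      rw [h]
      have : (Tm.s (sIter n (Tm.var y))).fv = (Tm.var y).fv := by
        simpa [Tm.fv] using (fv_sIter n (Tm.var y))
      rw [show ((sIter n (Tm.var y)).s) = Tm.s (sIter n (Tm.var y)) from rfl, this]
      simp [Tm.fv]
    | succ m =>
      simp only [sIter] at h
      exact ih (Tm.s.inj h)

lemma EqvTm.map {Γ Γ' : Set Fm} (h : ∀ p q, Fm.eq p q ∈ Γ → EqvTm Γ' p q)
    {t u : Tm} (he : EqvTm Γ t u) : EqvTm Γ' t u := by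
  induction he with
  | base hb => exact h _ _ hb
  | refl t => exact .refl t
  | symm _ ih => exact ih.symm
  | trans _ _ ih1 ih2 => exact ih1.trans ih2
  | sCongr _ ih => exact ih.sCongr

lemma EqvTm.mono {Γ Γ' : Set Fm} (h : Γ ⊆ Γ') {t u : Tm} (he : EqvTm Γ t u) :
    EqvTm Γ' t u := he.map (fun _ _ hm => .base (h hm))

lemma EqvTm.sIterCongr {Γ : Set Fm} {t u : Tm} (n : ℕ) (h : EqvTm Γ t u) :
    EqvTm Γ (sIter n t) (sIter n u) := by
  induction n with
  | zero => exact h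
  | succ n ih => exact ih.sCongr

lemma DepTm.symm {Γ : Set Fm} {t u : Tm} (h : DepTm Γ t u) : DepTm Γ u t := by
  obtain ⟨n, m, h⟩ := h; exact ⟨m, n, h.symm⟩

lemma DepTm.trans {Γ : Set Fm} {t u v : Tm} (h1 : DepTm Γ t u) (h2 : DepTm Γ u v) :
    DepTm Γ t v := by
  obtain ⟨n, m, h1⟩ := h1
  obtain ⟨n', m', h2⟩ := h2
  refine ⟨n' + n, m + m', ?_⟩
  have e1 : EqvTm Γ (sIter (n' + n) t) (sIter (n' + m) u) := by
    have := h1.sIterCongr n'; rwa [sIter_add, sIter_add] at this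
  have e2 : EqvTm Γ (sIter (m + n') u) (sIter (m + m') v) := by
    have := h2.sIterCongr m; rwa [sIter_add, sIter_add] at this
  rw [Nat.add_comm m n'] at e2
  exact e1.trans e2

lemma DepTm.ofEqv {Γ : Set Fm} {t u : Tm} (h : EqvTm Γ t u) : DepTm Γ t u := ⟨0, 0, h⟩

lemma DepTm.refl {Γ : Set Fm} (t : Tm) : DepTm Γ t t := ⟨0, 0, .refl t⟩

lemma depTm_s_left {Γ : Set Fm} {t u : Tm} : DepTm Γ (Tm.s t) u ↔ DepTm Γ t u := by
  constructor
  · rintro ⟨n, m, h⟩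
    rw [sIter_s] at h
    exact ⟨n + 1, m, h⟩
  · rintro ⟨n, m, h⟩
    exact ⟨n, m + 1, by rw [sIter_s]; exact h.sCongr⟩

lemma depTm_sIter_left {Γ : Set Fm} {t u : Tm} (n : ℕ) :
    DepTm Γ (sIter n t) u ↔ DepTm Γ t u := by
  induction n with
  | zero => rfl
  | succ n ih => rw [show sIter (n+1) t = Tm.s (sIter n t) from rfl, depTm_s_left, ih]

lemma eqv_var_fixed {Γ : Set Fm} {y : ℕ}
    (hΓ : ∀ p q, Fm.eq p q ∈ Γ → y ∉ p.fv ∧ y ∉ q.fv)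
    {w w' : Tm} (h : EqvTm Γ w w') :
    ∀ n, w = sIter n (Tm.var y) ↔ w' = sIter n (Tm.var y) := by
  induction h with
  | @base p q hb =>
    intro n
    constructor <;> intro he <;> exfalso
    · exact (hΓ p q hb).1 (by rw [he, fv_sIter]; simp [Tm.fv])
    · exact (hΓ p q hb).2 (by rw [he, fv_sIter]; simp [Tm.fv])
  | refl t => intro n; rfl
  | symm _ ih => intro n; exact (ih n).symm
  | trans _ _ ih1 ih2 => intro n; exact (ih1 n).trans (ih2 n)
  | @sCongr t u _ ih =>
    intro n
    cases n with
    | zero =>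
      constructor <;> intro he <;> exact absurd he (by simp [sIter])
    | succ n =>
      constructor <;> intro he
      · rw [show sIter (n+1) (Tm.var y) = Tm.s (sIter n (Tm.var y)) from rfl,
          (ih n).mp (Tm.s.inj he)]
      · rw [show sIter (n+1) (Tm.var y) = Tm.s (sIter n (Tm.var y)) from rfl,
          (ih n).mpr (Tm.s.inj he)]

lemma not_dep_var_fresh {Γ : Set Fm} {y : ℕ} {v : Tm}
    (hΓ : ∀ p q, Fm.eq p q ∈ Γ → y ∉ p.fv ∧ y ∉ q.fv) (hv : y ∉ v.fv) :
    ¬ DepTm Γ (Tm.var y) v := by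
  rintro ⟨n, m, h⟩
  exact hv (sIter_var_eq ((eqv_var_fixed hΓ h n).mp rfl))

lemma eqv_invariant {Γ : Set Fm} {Φ : Tm → Prop}
    (h1 : ∀ p q, Fm.eq p q ∈ Γ → (Φ p ↔ Φ q)) (h2 : ∀ t, Φ (Tm.s t) ↔ Φ t)
    {w w' : Tm} (h : EqvTm Γ w w') : Φ w ↔ Φ w' := by
  induction h with
  | base hb => exact h1 _ _ hb
  | refl t => rfl
  | symm _ ih => exact ih.symm
  | trans _ _ ih1 ih2 => exact ih1.trans ih2
  | sCongr _ ih => exact (h2 _).trans (ih.trans (h2 _).symm)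

lemma phi_sIter {Φ : Tm → Prop} (h2 : ∀ t, Φ (Tm.s t) ↔ Φ t) (n : ℕ) (t : Tm) :
    Φ (sIter n t) ↔ Φ t := by
  induction n with
  | zero => rfl
  | succ n ih => exact (h2 _).trans ih

lemma eqv_subst {Γ Γ' : Set Fm} {θ : ℕ → Tm}
    (h0 : ∀ p q, Fm.eq p q ∈ Γ → Fm.eq (p.subst θ) (q.subst θ) ∈ Γ')
    {t u : Tm} (h : EqvTm Γ t u) : EqvTm Γ' (t.subst θ) (u.subst θ) := by
  induction h with
  | base hb => exact .base (h0 _ _ hb)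
  | refl t => exact .refl _
  | symm _ ih => exact ih.symm
  | trans _ _ ih1 ih2 => exact ih1.trans ih2
  | sCongr _ ih => exact ih.sCongr

lemma eqv_of_noeq {Γ : Set Fm} (h0 : ∀ p q, Fm.eq p q ∉ Γ) {t u : Tm}
    (h : EqvTm Γ t u) : t = u := by
  induction h with
  | base hb => exact absurd hb (h0 _ _)
  | refl t => rfl
  | symm _ ih => exact ih.symm
  | trans _ _ ih1 ih2 => exact ih1.trans ih2
  | sCongr _ ih => exact congrArg Tm.s ih

/-- Antecedent formulas in the invariant: equations or `Add2` atoms. -/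
def GoodAnt (φ : Fm) : Prop := (∃ t u, φ = Fm.eq t u) ∨ (∃ a b c, φ = Fm.add2 a b c)

/-- Succedent formulas in the invariant: `Add1` atoms. -/
def GoodSuc (φ : Fm) : Prop := ∃ a b c, φ = Fm.add1 a b c

/-- The relational part of the invariant. -/
def RelInv (S : Seq) : Prop := ∀ t ∈ Aset S, ∀ u ∈ BCset S, ¬ DepTm (antSet S) t u

/-- The full invariant. -/
def InvSeq (S : Seq) : Prop :=
  (∀ φ ∈ S.ant, GoodAnt φ) ∧ (∀ φ ∈ S.suc, GoodSuc φ) ∧ RelInv S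

lemma goodAnt_subst_iff {θ : ℕ → Tm} {φ : Fm} : GoodAnt (φ.subst θ) ↔ GoodAnt φ := by
  cases φ <;> simp [GoodAnt, Fm.subst]

lemma goodSuc_subst_iff {θ : ℕ → Tm} {φ : Fm} : GoodSuc (φ.subst θ) ↔ GoodSuc φ := by
  cases φ <;> simp [GoodSuc, Fm.subst]

lemma Aset_mono {Γ Δ Γ' Δ' : Finset Fm} (hΓ : Γ' ⊆ Γ) (hΔ : Δ' ⊆ Δ) :
    Aset ⟨Γ', Δ'⟩ ⊆ Aset ⟨Γ, Δ⟩ := by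
  rintro t (⟨b, c, h⟩ | ⟨b, c, h⟩ | h)
  · exact Or.inl ⟨b, c, hΓ h⟩
  · exact Or.inr (Or.inl ⟨b, c, hΔ h⟩)
  · exact Or.inr (Or.inr h)

lemma BCset_mono {Γ Δ Γ' Δ' : Finset Fm} (hΓ : Γ' ⊆ Γ) (hΔ : Δ' ⊆ Δ) :
    BCset ⟨Γ', Δ'⟩ ⊆ BCset ⟨Γ, Δ⟩ := by
  rintro t (⟨a, c, h⟩ | ⟨a, c, h⟩ | ⟨a, c, h⟩ | ⟨a, c, h⟩)
  · exact Or.inl ⟨a, c, hΓ h⟩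
  · exact Or.inr (Or.inl ⟨a, c, hΓ h⟩)
  · exact Or.inr (Or.inr (Or.inl ⟨a, c, hΔ h⟩))
  · exact Or.inr (Or.inr (Or.inr ⟨a, c, hΔ h⟩))

lemma mem_Aset_subst {Γ Δ : Finset Fm} {θ : ℕ → Tm} {t : Tm} (h : t ∈ Aset ⟨Γ, Δ⟩) :
    t.subst θ ∈ Aset ⟨Γ.image (Fm.subst θ), Δ.image (Fm.subst θ)⟩ := by
  rcases h with ⟨b, c, h⟩ | ⟨b, c, h⟩ | h
  · exact Or.inl ⟨b.subst θ, c.subst θ, Finset.mem_image_of_mem _ h⟩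
  · exact Or.inr (Or.inl ⟨b.subst θ, c.subst θ, Finset.mem_image_of_mem _ h⟩)
  · subst h; exact Or.inr (Or.inr rfl)

lemma mem_BCset_subst {Γ Δ : Finset Fm} {θ : ℕ → Tm} {t : Tm} (h : t ∈ BCset ⟨Γ, Δ⟩) :
    t.subst θ ∈ BCset ⟨Γ.image (Fm.subst θ), Δ.image (Fm.subst θ)⟩ := by
  rcases h with ⟨a, c, h⟩ | ⟨a, c, h⟩ | ⟨a, c, h⟩ | ⟨a, c, h⟩
  · exact Or.inl ⟨a.subst θ, c.subst θ, Finset.mem_image_of_mem _ h⟩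
  · exact Or.inr (Or.inl ⟨a.subst θ, c.subst θ, Finset.mem_image_of_mem _ h⟩)
  · exact Or.inr (Or.inr (Or.inl ⟨a.subst θ, c.subst θ, Finset.mem_image_of_mem _ h⟩))
  · exact Or.inr (Or.inr (Or.inr ⟨a.subst θ, c.subst θ, Finset.mem_image_of_mem _ h⟩))

lemma inv_goal : InvSeq goalSeq := by
  refine ⟨?_, ?_, ?_⟩
  · intro φ hφ
    simp only [goalSeq, Finset.mem_singleton] at hφ
    subst hφ
    exact Or.inr ⟨_, _, _, rfl⟩
  · intro φ hφ
    simp only [goalSeq, Finset.mem_singleton] at hφ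
    subst hφ
    exact ⟨_, _, _, rfl⟩
  · intro t ht u hu hd
    have hne : ∀ p q, Fm.eq p q ∉ antSet goalSeq := by
      intro p q hpq
      simp [antSet, goalSeq] at hpq
    obtain ⟨n, m, h⟩ := hd
    have heq := eqv_of_noeq hne h
    have hvar : t.varOf = u.varOf := by
      rw [← varOf_sIter n t, ← varOf_sIter m u, heq]
    simp only [Aset, goalSeq, Set.mem_setOf_eq, Finset.mem_singleton] at ht
    simp only [BCset, goalSeq, Set.mem_setOf_eq, Finset.mem_singleton] at hu
    have ht' : t = Tm.var 0 ∨ t = Tm.zero := by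
      rcases ht with ⟨b, c, h'⟩ | ⟨b, c, h'⟩ | h'
      · cases h'; exact Or.inl rfl
      · cases h'; exact Or.inl rfl
      · exact Or.inr h'
    have hu' : u = Tm.var 1 ∨ u = Tm.var 2 := by
      rcases hu with ⟨p, q, h'⟩ | ⟨p, q, h'⟩ | ⟨p, q, h'⟩ | ⟨p, q, h'⟩
      · cases h'; exact Or.inl rfl
      · cases h'; exact Or.inr rfl
      · cases h'; exact Or.inl rfl
      · cases h'; exact Or.inr rfl
    rcases ht' with rfl | rfl <;> rcases hu' with rfl | rfl <;> simp [Tm.varOf] at hvar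

lemma inv_weak {Γ Δ Γ' Δ' : Finset Fm} (hΓ : Γ' ⊆ Γ) (hΔ : Δ' ⊆ Δ)
    (hS : InvSeq ⟨Γ, Δ⟩) : InvSeq ⟨Γ', Δ'⟩ := by
  obtain ⟨hant, hsuc, hrel⟩ := hS
  refine ⟨fun φ hφ => hant φ (hΓ hφ), fun φ hφ => hsuc φ (hΔ hφ), ?_⟩
  intro t ht u hu hd
  refine hrel t (Aset_mono hΓ hΔ ht) u (BCset_mono hΓ hΔ hu) ?_
  obtain ⟨n, m, h⟩ := hd
  exact ⟨n, m, h.mono (by exact_mod_cast Finset.coe_subset.mpr hΓ)⟩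

lemma inv_subst {Γ Δ : Finset Fm} {θ : ℕ → Tm}
    (hS : InvSeq ⟨Γ.image (Fm.subst θ), Δ.image (Fm.subst θ)⟩) : InvSeq ⟨Γ, Δ⟩ := by
  obtain ⟨hant, hsuc, hrel⟩ := hS
  refine ⟨?_, ?_, ?_⟩
  · intro φ hφ
    exact goodAnt_subst_iff.mp (hant _ (Finset.mem_image_of_mem _ hφ))
  · intro φ hφ
    exact goodSuc_subst_iff.mp (hsuc _ (Finset.mem_image_of_mem _ hφ))
  · intro t ht u hu hd
    refine hrel (t.subst θ) (mem_Aset_subst ht) (u.subst θ) (mem_BCset_subst hu) ?_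
    obtain ⟨n, m, h⟩ := hd
    refine ⟨n, m, ?_⟩
    rw [← subst_sIter, ← subst_sIter]
    refine eqv_subst (fun p q hpq => ?_) h
    have hpq' : Fm.eq p q ∈ Γ := hpq
    have : (Fm.eq p q).subst θ ∈ Γ.image (Fm.subst θ) := Finset.mem_image_of_mem _ hpq'
    exact this

lemma inv_add1R2 {Γ Δ : Finset Fm} {a b c : Tm}
    (hS : InvSeq ⟨Γ, insert (.add1 (.s a) b (.s c)) Δ⟩) :
    InvSeq ⟨Γ, insert (.add1 a b c) Δ⟩ := by
  obtain ⟨hant, hsuc, hrel⟩ := hS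
  refine ⟨hant, ?_, ?_⟩
  · intro φ hφ
    rcases Finset.mem_insert.mp hφ with rfl | hφ
    · exact ⟨_, _, _, rfl⟩
    · exact hsuc φ (Finset.mem_insert_of_mem hφ)
  · intro t ht u hu hd
    have hA : ∃ v ∈ Aset (⟨Γ, insert (.add1 (.s a) b (.s c)) Δ⟩ : Seq),
        DepTm (↑Γ) v t := by
      rcases ht with ⟨b', c', h⟩ | ⟨b', c', h⟩ | h
      · exact ⟨t, Or.inl ⟨b', c', h⟩, DepTm.refl t⟩
      · rcases Finset.mem_insert.mp h with heq | h
        · injection heq with h1 h2 h3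
          subst h1
          exact ⟨Tm.s t, Or.inr (Or.inl ⟨b, Tm.s c, Finset.mem_insert_self _ _⟩),
            depTm_s_left.mpr (DepTm.refl t)⟩
        · exact ⟨t, Or.inr (Or.inl ⟨b', c', Finset.mem_insert_of_mem h⟩), DepTm.refl t⟩
      · exact ⟨t, Or.inr (Or.inr h), DepTm.refl t⟩
    have hB : ∃ w ∈ BCset (⟨Γ, insert (.add1 (.s a) b (.s c)) Δ⟩ : Seq),
        DepTm (↑Γ) u w := by
      rcases hu with ⟨a', c', h⟩ | ⟨a', c', h⟩ | ⟨a', c', h⟩ | ⟨a', c', h⟩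
      · exact ⟨u, Or.inl ⟨a', c', h⟩, DepTm.refl u⟩
      · exact ⟨u, Or.inr (Or.inl ⟨a', c', h⟩), DepTm.refl u⟩
      · rcases Finset.mem_insert.mp h with heq | h
        · injection heq with h1 h2 h3
          subst h2
          exact ⟨u, Or.inr (Or.inr (Or.inl ⟨Tm.s a, Tm.s c, Finset.mem_insert_self _ _⟩)),
            DepTm.refl u⟩
        · exact ⟨u, Or.inr (Or.inr (Or.inl ⟨a', c', Finset.mem_insert_of_mem h⟩)),
            DepTm.refl u⟩
      · rcases Finset.mem_insert.mp h with heq | h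
        · injection heq with h1 h2 h3
          subst h3
          exact ⟨Tm.s u, Or.inr (Or.inr (Or.inr ⟨Tm.s a, b, Finset.mem_insert_self _ _⟩)),
            (depTm_s_left.mpr (DepTm.refl u)).symm⟩
        · exact ⟨u, Or.inr (Or.inr (Or.inr ⟨a', c', Finset.mem_insert_of_mem h⟩)),
            DepTm.refl u⟩
    obtain ⟨v, hv, hdv⟩ := hA
    obtain ⟨w, hw, hdw⟩ := hB
    exact hrel v hv w hw ((hdv.trans hd).trans hdw)

lemma inv_eqLa {Γ Δ : Finset Fm} {v1 v2 : ℕ} {t u : Tm}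
    (hS : InvSeq ⟨insert (.eq t u) (Γ.image (Fm.subst (sub2 v1 v2 t u))),
        Δ.image (Fm.subst (sub2 v1 v2 t u))⟩) :
    InvSeq ⟨insert (.eq t u) (Γ.image (Fm.subst (sub2 v1 v2 u t))),
        Δ.image (Fm.subst (sub2 v1 v2 u t))⟩ := by
  obtain ⟨hant, hsuc, hrel⟩ := hS
  set θ1 := sub2 v1 v2 t u with hθ1
  set θ2 := sub2 v1 v2 u t with hθ2
  set C : Set Fm := antSet ⟨insert (.eq t u) (Γ.image (Fm.subst θ1)), Δ.image (Fm.subst θ1)⟩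
    with hC
  have htu : EqvTm C t u := .base (by
    show Fm.eq t u ∈ (↑(insert (Fm.eq t u) (Γ.image (Fm.subst θ1))) : Set Fm)
    exact_mod_cast Finset.mem_insert_self _ _)
  have hpt : ∀ w : Tm, EqvTm C (w.subst θ1) (w.subst θ2) := by
    intro w
    induction w with
    | var w =>
      show EqvTm C (θ1 w) (θ2 w)
      rw [hθ1, hθ2]
      unfold sub2
      by_cases h1 : w = v1
      · rw [if_pos h1, if_pos h1]; exact htu
      · by_cases h2 : w = v2
        · rw [if_neg h1, if_neg h1, if_pos h2, if_pos h2]; exact htu.symm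
        · rw [if_neg h1, if_neg h1, if_neg h2, if_neg h2]; exact .refl _
    | zero => exact .refl _
    | s w ih => exact ih.sCongr
  have hbase : ∀ p q, Fm.eq p q ∈
      antSet ⟨insert (.eq t u) (Γ.image (Fm.subst θ2)), Δ.image (Fm.subst θ2)⟩ →
      EqvTm C p q := by
    intro p q hpq
    have hpq' : Fm.eq p q ∈ insert (Fm.eq t u) (Γ.image (Fm.subst θ2)) := hpq
    rcases Finset.mem_insert.mp hpq' with heq | hmem
    · injection heq with h1 h2; subst h1; subst h2; exact htu
    · obtain ⟨φ, hφ, hφeq⟩ := Finset.mem_image.mp hmem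
      cases φ with
      | eq p' q' =>
        injection hφeq with h1 h2
        subst h1; subst h2
        have hb : EqvTm C (p'.subst θ1) (q'.subst θ1) := .base (by
          show Fm.eq (p'.subst θ1) (q'.subst θ1) ∈
            (↑(insert (Fm.eq t u) (Γ.image (Fm.subst θ1))) : Set Fm)
          exact_mod_cast Finset.mem_insert_of_mem (Finset.mem_image_of_mem _ hφ))
        exact ((hpt p').symm.trans hb).trans (hpt q')
      | add1 a b c => exact absurd hφeq (by simp [Fm.subst])
      | add2 a b c => exact absurd hφeq (by simp [Fm.subst])
      | not φ => exact absurd hφeq (by simp [Fm.subst])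
      | and φ ψ => exact absurd hφeq (by simp [Fm.subst])
      | or φ ψ => exact absurd hφeq (by simp [Fm.subst])
      | imp φ ψ => exact absurd hφeq (by simp [Fm.subst])
      | all x φ => exact absurd hφeq (by simp [Fm.subst])
      | ex x φ => exact absurd hφeq (by simp [Fm.subst])
  refine ⟨?_, ?_, ?_⟩
  · intro φ hφ
    rcases Finset.mem_insert.mp hφ with rfl | hφ
    · exact Or.inl ⟨_, _, rfl⟩
    · obtain ⟨ψ, hψ, hψeq⟩ := Finset.mem_image.mp hφ
      subst hψeq
      rw [goodAnt_subst_iff]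
      have := hant (ψ.subst θ1)
        (Finset.mem_insert_of_mem (Finset.mem_image_of_mem _ hψ))
      rwa [goodAnt_subst_iff] at this
  · intro φ hφ
    obtain ⟨ψ, hψ, hψeq⟩ := Finset.mem_image.mp hφ
    subst hψeq
    rw [goodSuc_subst_iff]
    have := hsuc (ψ.subst θ1) (Finset.mem_image_of_mem _ hψ)
    rwa [goodSuc_subst_iff] at this
  · intro t' ht' u' hu' hd'
    have hA : ∃ a' : Tm, t' = a'.subst θ2 ∧ a'.subst θ1 ∈
        Aset ⟨insert (.eq t u) (Γ.image (Fm.subst θ1)), Δ.image (Fm.subst θ1)⟩ := by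
      rcases ht' with ⟨b', c', h⟩ | ⟨b', c', h⟩ | h
      · rcases Finset.mem_insert.mp h with heq | hmem
        · exact absurd heq (by simp)
        · obtain ⟨φ, hφ, hφeq⟩ := Finset.mem_image.mp hmem
          cases φ with
          | add2 a0 b0 c0 =>
            injection hφeq with h1 h2 h3
            exact ⟨a0, h1.symm, Or.inl ⟨b0.subst θ1, c0.subst θ1,
              Finset.mem_insert_of_mem (Finset.mem_image_of_mem _ hφ)⟩⟩
          | eq p' q' => exact absurd hφeq (by simp [Fm.subst])
          | add1 a0 b0 c0 => exact absurd hφeq (by simp [Fm.subst])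
          | not φ => exact absurd hφeq (by simp [Fm.subst])
          | and φ ψ => exact absurd hφeq (by simp [Fm.subst])
          | or φ ψ => exact absurd hφeq (by simp [Fm.subst])
          | imp φ ψ => exact absurd hφeq (by simp [Fm.subst])
          | all x φ => exact absurd hφeq (by simp [Fm.subst])
          | ex x φ => exact absurd hφeq (by simp [Fm.subst])
      · obtain ⟨φ, hφ, hφeq⟩ := Finset.mem_image.mp h
        cases φ with
        | add1 a0 b0 c0 =>
          injection hφeq with h1 h2 h3
          exact ⟨a0, h1.symm, Or.inr (Or.inl ⟨b0.subst θ1, c0.subst θ1,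
            Finset.mem_image_of_mem _ hφ⟩)⟩
        | eq p' q' => exact absurd hφeq (by simp [Fm.subst])
        | add2 a0 b0 c0 => exact absurd hφeq (by simp [Fm.subst])
        | not φ => exact absurd hφeq (by simp [Fm.subst])
        | and φ ψ => exact absurd hφeq (by simp [Fm.subst])
        | or φ ψ => exact absurd hφeq (by simp [Fm.subst])
        | imp φ ψ => exact absurd hφeq (by simp [Fm.subst])
        | all x φ => exact absurd hφeq (by simp [Fm.subst])
        | ex x φ => exact absurd hφeq (by simp [Fm.subst])
      · exact ⟨Tm.zero, h, Or.inr (Or.inr rfl)⟩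
    have hB : ∃ b' : Tm, u' = b'.subst θ2 ∧ b'.subst θ1 ∈
        BCset ⟨insert (.eq t u) (Γ.image (Fm.subst θ1)), Δ.image (Fm.subst θ1)⟩ := by
      rcases hu' with ⟨a', c', h⟩ | ⟨a', c', h⟩ | ⟨a', c', h⟩ | ⟨a', c', h⟩
      · rcases Finset.mem_insert.mp h with heq | hmem
        · exact absurd heq (by simp)
        · obtain ⟨φ, hφ, hφeq⟩ := Finset.mem_image.mp hmem
          cases φ with
          | add2 a0 b0 c0 =>
            injection hφeq with h1 h2 h3
            exact ⟨b0, h2.symm, Or.inl ⟨a0.subst θ1, c0.subst θ1,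
              Finset.mem_insert_of_mem (Finset.mem_image_of_mem _ hφ)⟩⟩
          | eq p' q' => exact absurd hφeq (by simp [Fm.subst])
          | add1 a0 b0 c0 => exact absurd hφeq (by simp [Fm.subst])
          | not φ => exact absurd hφeq (by simp [Fm.subst])
          | and φ ψ => exact absurd hφeq (by simp [Fm.subst])
          | or φ ψ => exact absurd hφeq (by simp [Fm.subst])
          | imp φ ψ => exact absurd hφeq (by simp [Fm.subst])
          | all x φ => exact absurd hφeq (by simp [Fm.subst])
          | ex x φ => exact absurd hφeq (by simp [Fm.subst])
      · rcases Finset.mem_insert.mp h with heq | hmem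
        · exact absurd heq (by simp)
        · obtain ⟨φ, hφ, hφeq⟩ := Finset.mem_image.mp hmem
          cases φ with
          | add2 a0 b0 c0 =>
            injection hφeq with h1 h2 h3
            exact ⟨c0, h3.symm, Or.inr (Or.inl ⟨a0.subst θ1, b0.subst θ1,
              Finset.mem_insert_of_mem (Finset.mem_image_of_mem _ hφ)⟩)⟩
          | eq p' q' => exact absurd hφeq (by simp [Fm.subst])
          | add1 a0 b0 c0 => exact absurd hφeq (by simp [Fm.subst])
          | not φ => exact absurd hφeq (by simp [Fm.subst])
          | and φ ψ => exact absurd hφeq (by simp [Fm.subst])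
          | or φ ψ => exact absurd hφeq (by simp [Fm.subst])
          | imp φ ψ => exact absurd hφeq (by simp [Fm.subst])
          | all x φ => exact absurd hφeq (by simp [Fm.subst])
          | ex x φ => exact absurd hφeq (by simp [Fm.subst])
      · obtain ⟨φ, hφ, hφeq⟩ := Finset.mem_image.mp h
        cases φ with
        | add1 a0 b0 c0 =>
          injection hφeq with h1 h2 h3
          exact ⟨b0, h2.symm, Or.inr (Or.inr (Or.inl ⟨a0.subst θ1, c0.subst θ1,
            Finset.mem_image_of_mem _ hφ⟩))⟩
        | eq p' q' => exact absurd hφeq (by simp [Fm.subst])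
        | add2 a0 b0 c0 => exact absurd hφeq (by simp [Fm.subst])
        | not φ => exact absurd hφeq (by simp [Fm.subst])
        | and φ ψ => exact absurd hφeq (by simp [Fm.subst])
        | or φ ψ => exact absurd hφeq (by simp [Fm.subst])
        | imp φ ψ => exact absurd hφeq (by simp [Fm.subst])
        | all x φ => exact absurd hφeq (by simp [Fm.subst])
        | ex x φ => exact absurd hφeq (by simp [Fm.subst])
      · obtain ⟨φ, hφ, hφeq⟩ := Finset.mem_image.mp h
        cases φ with
        | add1 a0 b0 c0 =>
          injection hφeq with h1 h2 h3
          exact ⟨c0, h3.symm, Or.inr (Or.inr (Or.inr ⟨a0.subst θ1, b0.subst θ1,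
            Finset.mem_image_of_mem _ hφ⟩))⟩
        | eq p' q' => exact absurd hφeq (by simp [Fm.subst])
        | add2 a0 b0 c0 => exact absurd hφeq (by simp [Fm.subst])
        | not φ => exact absurd hφeq (by simp [Fm.subst])
        | and φ ψ => exact absurd hφeq (by simp [Fm.subst])
        | or φ ψ => exact absurd hφeq (by simp [Fm.subst])
        | imp φ ψ => exact absurd hφeq (by simp [Fm.subst])
        | all x φ => exact absurd hφeq (by simp [Fm.subst])
        | ex x φ => exact absurd hφeq (by simp [Fm.subst])
    obtain ⟨a', rfl, hA'⟩ := hA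
    obtain ⟨b', rfl, hB'⟩ := hB
    obtain ⟨n, m, h⟩ := hd'
    have hmain : EqvTm C (sIter n (a'.subst θ1)) (sIter m (b'.subst θ1)) := by
      have h1 : EqvTm C (sIter n (a'.subst θ1)) (sIter n (a'.subst θ2)) :=
        (hpt a').sIterCongr n
      have h2 : EqvTm C (sIter m (b'.subst θ2)) (sIter m (b'.subst θ1)) :=
        ((hpt b').symm).sIterCongr m
      exact (h1.trans (h.map hbase)).trans h2
    exact hrel _ hA' _ hB' ⟨n, m, hmain⟩

lemma fresh_facts {Γ Δ : Finset Fm} {a b c : Tm} {w : ℕ}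
    (hw : ∀ ψ ∈ insert (Fm.add2 a b c) (Γ ∪ Δ), w ∉ Fm.fv ψ) :
    (∀ v ∈ Aset (⟨insert (Fm.add2 a b c) Γ, Δ⟩ : Seq), w ∉ v.fv) ∧
    (∀ v ∈ BCset (⟨insert (Fm.add2 a b c) Γ, Δ⟩ : Seq), w ∉ v.fv) ∧
    (∀ p q, Fm.eq p q ∈ antSet (⟨insert (Fm.add2 a b c) Γ, Δ⟩ : Seq) →
      w ∉ p.fv ∧ w ∉ q.fv) := by
  have hw' : ∀ ψ, (ψ ∈ insert (Fm.add2 a b c) Γ ∨ ψ ∈ Δ) → w ∉ ψ.fv := by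
    rintro ψ (hψ | hψ)
    · rcases Finset.mem_insert.mp hψ with rfl | hψ
      · exact hw _ (Finset.mem_insert_self _ _)
      · exact hw _ (Finset.mem_insert_of_mem (Finset.mem_union_left _ hψ))
    · exact hw _ (Finset.mem_insert_of_mem (Finset.mem_union_right _ hψ))
  refine ⟨?_, ?_, ?_⟩
  · rintro v (⟨b', c', h⟩ | ⟨b', c', h⟩ | rfl)
    · have := hw' _ (Or.inl h)
      simp only [Fm.fv, Set.mem_union, not_or] at this
      exact this.1.1
    · have := hw' _ (Or.inr h)
      simp only [Fm.fv, Set.mem_union, not_or] at this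
      exact this.1.1
    · simp [Tm.fv]
  · rintro v (⟨a', c', h⟩ | ⟨a', c', h⟩ | ⟨a', c', h⟩ | ⟨a', c', h⟩)
    · have := hw' _ (Or.inl h)
      simp only [Fm.fv, Set.mem_union, not_or] at this
      exact this.1.2
    · have := hw' _ (Or.inl h)
      simp only [Fm.fv, Set.mem_union, not_or] at this
      exact this.2
    · have := hw' _ (Or.inr h)
      simp only [Fm.fv, Set.mem_union, not_or] at this
      exact this.1.2
    · have := hw' _ (Or.inr h)
      simp only [Fm.fv, Set.mem_union, not_or] at this
      exact this.2
  · intro p q h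
    have h' : Fm.eq p q ∈ insert (Fm.add2 a b c) Γ := h
    have := hw' _ (Or.inl h')
    simp only [Fm.fv, Set.mem_union, not_or] at this
    exact this

lemma inv_caseAdd2_left {Γ Δ : Finset Fm} {a b c : Tm} {x y z : ℕ}
    (hfresh : ∀ ψ ∈ insert (Fm.add2 a b c) (Γ ∪ Δ),
      x ∉ Fm.fv ψ ∧ y ∉ Fm.fv ψ ∧ z ∉ Fm.fv ψ)
    (hS : InvSeq ⟨insert (.add2 a b c) Γ, Δ⟩) :
    InvSeq ⟨insert (.eq a .zero) (insert (.eq b (.var y))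
      (insert (.eq c (.var y)) Γ)), Δ⟩ := by
  obtain ⟨hant, hsuc, hrel⟩ := hS
  obtain ⟨hyA, hyBC, hyeq⟩ :=
    fresh_facts (Γ := Γ) (Δ := Δ) (a := a) (b := b) (c := c) (w := y)
      (fun ψ hψ => (hfresh ψ hψ).2.1)
  have haA : a ∈ Aset (⟨insert (Fm.add2 a b c) Γ, Δ⟩ : Seq) :=
    Or.inl ⟨b, c, Finset.mem_insert_self _ _⟩
  have hbBC : b ∈ BCset (⟨insert (Fm.add2 a b c) Γ, Δ⟩ : Seq) :=
    Or.inl ⟨a, c, Finset.mem_insert_self _ _⟩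
  have hcBC : c ∈ BCset (⟨insert (Fm.add2 a b c) Γ, Δ⟩ : Seq) :=
    Or.inr (Or.inl ⟨a, b, Finset.mem_insert_self _ _⟩)
  refine ⟨?_, hsuc, ?_⟩
  · intro φ hφ
    rcases Finset.mem_insert.mp hφ with rfl | hφ
    · exact Or.inl ⟨_, _, rfl⟩
    rcases Finset.mem_insert.mp hφ with rfl | hφ
    · exact Or.inl ⟨_, _, rfl⟩
    rcases Finset.mem_insert.mp hφ with rfl | hφ
    · exact Or.inl ⟨_, _, rfl⟩
    · exact hant φ (Finset.mem_insert_of_mem hφ)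
  · intro t' ht' u' hu' hd'
    set S : Seq := ⟨insert (Fm.add2 a b c) Γ, Δ⟩ with hSdef
    set Φ : Tm → Prop := fun w => ∃ v ∈ Aset S, DepTm (antSet S) w v with hΦ
    have h2 : ∀ w, Φ (Tm.s w) ↔ Φ w := by
      intro w
      constructor
      · rintro ⟨v, hv, hd⟩; exact ⟨v, hv, depTm_s_left.mp hd⟩
      · rintro ⟨v, hv, hd⟩; exact ⟨v, hv, depTm_s_left.mpr hd⟩
    have hΦb : ¬ Φ b := by rintro ⟨v, hv, hd⟩; exact hrel v hv b hbBC hd.symm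
    have hΦc : ¬ Φ c := by rintro ⟨v, hv, hd⟩; exact hrel v hv c hcBC hd.symm
    have hΦy : ¬ Φ (Tm.var y) := by
      rintro ⟨v, hv, hd⟩
      exact not_dep_var_fresh hyeq (hyA v hv) hd
    have h1 : ∀ p q, Fm.eq p q ∈
        antSet (⟨insert (Fm.eq a .zero) (insert (Fm.eq b (.var y))
          (insert (Fm.eq c (.var y)) Γ)), Δ⟩ : Seq) → (Φ p ↔ Φ q) := by
      intro p q hpq
      have hpq' : Fm.eq p q ∈ insert (Fm.eq a .zero) (insert (Fm.eq b (.var y))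
          (insert (Fm.eq c (.var y)) Γ)) := hpq
      rcases Finset.mem_insert.mp hpq' with heq | hpq'
      · injection heq with h1' h2'; rw [h1', h2']
        exact iff_of_true ⟨a, haA, DepTm.refl a⟩
          ⟨Tm.zero, Or.inr (Or.inr rfl), DepTm.refl _⟩
      rcases Finset.mem_insert.mp hpq' with heq | hpq'
      · injection heq with h1' h2'; rw [h1', h2']
        exact iff_of_false hΦb hΦy
      rcases Finset.mem_insert.mp hpq' with heq | hpq'
      · injection heq with h1' h2'; rw [h1', h2']
        exact iff_of_false hΦc hΦy
      · have hbase : EqvTm (antSet S) p q := .base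
          (Finset.mem_coe.mpr (Finset.mem_insert_of_mem hpq'))
        constructor
        · rintro ⟨v, hv, hd⟩; exact ⟨v, hv, (DepTm.ofEqv hbase).symm.trans hd⟩
        · rintro ⟨v, hv, hd⟩; exact ⟨v, hv, (DepTm.ofEqv hbase).trans hd⟩
    obtain ⟨n, m, h⟩ := hd'
    have key := eqv_invariant h1 h2 h
    rw [phi_sIter h2, phi_sIter h2] at key
    have hΦt : Φ t' := by
      rcases ht' with ⟨b', c', h'⟩ | ⟨b', c', h'⟩ | rfl
      · rcases Finset.mem_insert.mp h' with heq | h'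
        · simp at heq
        rcases Finset.mem_insert.mp h' with heq | h'
        · simp at heq
        rcases Finset.mem_insert.mp h' with heq | h'
        · simp at heq
        · exact ⟨t', Or.inl ⟨b', c', Finset.mem_insert_of_mem h'⟩, DepTm.refl t'⟩
      · exact ⟨t', Or.inr (Or.inl ⟨b', c', h'⟩), DepTm.refl t'⟩
      · exact ⟨Tm.zero, Or.inr (Or.inr rfl), DepTm.refl _⟩
    have hΦu : ¬ Φ u' := by
      have hu'' : u' ∈ BCset S := by
        rcases hu' with ⟨a', c', h'⟩ | ⟨a', c', h'⟩ | ⟨a', c', h'⟩ | ⟨a', c', h'⟩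
        · rcases Finset.mem_insert.mp h' with heq | h'
          · simp at heq
          rcases Finset.mem_insert.mp h' with heq | h'
          · simp at heq
          rcases Finset.mem_insert.mp h' with heq | h'
          · simp at heq
          · exact Or.inl ⟨a', c', Finset.mem_insert_of_mem h'⟩
        · rcases Finset.mem_insert.mp h' with heq | h'
          · simp at heq
          rcases Finset.mem_insert.mp h' with heq | h'
          · simp at heq
          rcases Finset.mem_insert.mp h' with heq | h'
          · simp at heq
          · exact Or.inr (Or.inl ⟨a', c', Finset.mem_insert_of_mem h'⟩)
        · exact Or.inr (Or.inr (Or.inl ⟨a', c', h'⟩))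
        · exact Or.inr (Or.inr (Or.inr ⟨a', c', h'⟩))
      rintro ⟨v, hv, hd⟩
      exact hrel v hv u' hu'' hd.symm
    exact hΦu (key.mp hΦt)

lemma inv_caseAdd2_right {Γ Δ : Finset Fm} {a b c : Tm} {x y z : ℕ}
    (hxy : x ≠ y) (hxz : x ≠ z)
    (hfresh : ∀ ψ ∈ insert (Fm.add2 a b c) (Γ ∪ Δ),
      x ∉ Fm.fv ψ ∧ y ∉ Fm.fv ψ ∧ z ∉ Fm.fv ψ)
    (hS : InvSeq ⟨insert (.add2 a b c) Γ, Δ⟩) :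
    InvSeq ⟨insert (.eq a (.s (.var x))) (insert (.eq b (.var y))
      (insert (.eq c (.var z)) (insert (.add2 (.var x) (.s (.var y)) (.var z)) Γ))), Δ⟩ := by
  obtain ⟨hant, hsuc, hrel⟩ := hS
  obtain ⟨hxA, hxBC, hxeq⟩ :=
    fresh_facts (Γ := Γ) (Δ := Δ) (a := a) (b := b) (c := c) (w := x)
      (fun ψ hψ => (hfresh ψ hψ).1)
  obtain ⟨hyA, hyBC, hyeq⟩ :=
    fresh_facts (Γ := Γ) (Δ := Δ) (a := a) (b := b) (c := c) (w := y)
      (fun ψ hψ => (hfresh ψ hψ).2.1)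
  obtain ⟨hzA, hzBC, hzeq⟩ :=
    fresh_facts (Γ := Γ) (Δ := Δ) (a := a) (b := b) (c := c) (w := z)
      (fun ψ hψ => (hfresh ψ hψ).2.2)
  have haA : a ∈ Aset (⟨insert (Fm.add2 a b c) Γ, Δ⟩ : Seq) :=
    Or.inl ⟨b, c, Finset.mem_insert_self _ _⟩
  have hbBC : b ∈ BCset (⟨insert (Fm.add2 a b c) Γ, Δ⟩ : Seq) :=
    Or.inl ⟨a, c, Finset.mem_insert_self _ _⟩
  have hcBC : c ∈ BCset (⟨insert (Fm.add2 a b c) Γ, Δ⟩ : Seq) :=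
    Or.inr (Or.inl ⟨a, b, Finset.mem_insert_self _ _⟩)
  refine ⟨?_, hsuc, ?_⟩
  · intro φ hφ
    rcases Finset.mem_insert.mp hφ with rfl | hφ
    · exact Or.inl ⟨_, _, rfl⟩
    rcases Finset.mem_insert.mp hφ with rfl | hφ
    · exact Or.inl ⟨_, _, rfl⟩
    rcases Finset.mem_insert.mp hφ with rfl | hφ
    · exact Or.inl ⟨_, _, rfl⟩
    rcases Finset.mem_insert.mp hφ with rfl | hφ
    · exact Or.inr ⟨_, _, _, rfl⟩
    · exact hant φ (Finset.mem_insert_of_mem hφ)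
  · intro t' ht' u' hu' hd'
    set S : Seq := ⟨insert (Fm.add2 a b c) Γ, Δ⟩ with hSdef
    set Φ : Tm → Prop := fun w =>
      (∃ v ∈ Aset S, DepTm (antSet S) w v) ∨ (∃ j, w = sIter j (Tm.var x)) with hΦ
    have h2 : ∀ w, Φ (Tm.s w) ↔ Φ w := by
      intro w
      constructor
      · rintro (⟨v, hv, hd⟩ | ⟨j, hj⟩)
        · exact Or.inl ⟨v, hv, depTm_s_left.mp hd⟩
        · cases j with
          | zero => simp [sIter] at hj
          | succ j => exact Or.inr ⟨j, Tm.s.inj hj⟩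
      · rintro (⟨v, hv, hd⟩ | ⟨j, hj⟩)
        · exact Or.inl ⟨v, hv, depTm_s_left.mpr hd⟩
        · exact Or.inr ⟨j + 1, by rw [hj]; rfl⟩
    -- terms of the original sequent are not `x`-terms
    have hnotx : ∀ v : Tm, x ∉ v.fv → ¬ ∃ j, v = sIter j (Tm.var x) := by
      rintro v hv ⟨j, hj⟩
      exact hv (sIter_var_eq (m := 0) (by exact hj))
    have hΦb : ¬ Φ b := by
      rintro (⟨v, hv, hd⟩ | hj)
      · exact hrel v hv b hbBC hd.symm
      · exact hnotx b (hxBC b hbBC) hj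
    have hΦc : ¬ Φ c := by
      rintro (⟨v, hv, hd⟩ | hj)
      · exact hrel v hv c hcBC hd.symm
      · exact hnotx c (hxBC c hcBC) hj
    have hΦy : ¬ Φ (Tm.var y) := by
      rintro (⟨v, hv, hd⟩ | ⟨j, hj⟩)
      · exact not_dep_var_fresh hyeq (hyA v hv) hd
      · have : x ∈ (Tm.var y).fv := sIter_var_eq (m := 0) (by exact hj)
        simp [Tm.fv] at this
        exact hxy this
    have hΦz : ¬ Φ (Tm.var z) := by
      rintro (⟨v, hv, hd⟩ | ⟨j, hj⟩)
      · exact not_dep_var_fresh hzeq (hzA v hv) hd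
      · have : x ∈ (Tm.var z).fv := sIter_var_eq (m := 0) (by exact hj)
        simp [Tm.fv] at this
        exact hxz this
    have hBCS : ∀ u'' ∈ BCset S, ¬ Φ u'' := by
      rintro u'' hu'' (⟨v, hv, hd⟩ | hj)
      · exact hrel v hv u'' hu'' hd.symm
      · exact hnotx u'' (hxBC u'' hu'') hj
    have h1 : ∀ p q, Fm.eq p q ∈
        antSet (⟨insert (Fm.eq a (.s (.var x))) (insert (Fm.eq b (.var y))
          (insert (Fm.eq c (.var z)) (insert (Fm.add2 (.var x) (.s (.var y)) (.var z)) Γ))),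
          Δ⟩ : Seq) → (Φ p ↔ Φ q) := by
      intro p q hpq
      have hpq' : Fm.eq p q ∈ insert (Fm.eq a (.s (.var x))) (insert (Fm.eq b (.var y))
          (insert (Fm.eq c (.var z)) (insert (Fm.add2 (.var x) (.s (.var y)) (.var z)) Γ))) :=
        hpq
      rcases Finset.mem_insert.mp hpq' with heq | hpq'
      · injection heq with h1' h2'; rw [h1', h2']
        exact iff_of_true (Or.inl ⟨a, haA, DepTm.refl a⟩) (Or.inr ⟨1, rfl⟩)
      rcases Finset.mem_insert.mp hpq' with heq | hpq'
      · injection heq with h1' h2'; rw [h1', h2']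
        exact iff_of_false hΦb hΦy
      rcases Finset.mem_insert.mp hpq' with heq | hpq'
      · injection heq with h1' h2'; rw [h1', h2']
        exact iff_of_false hΦc hΦz
      rcases Finset.mem_insert.mp hpq' with heq | hpq'
      · simp at heq
      · have hbase : EqvTm (antSet S) p q := .base
          (Finset.mem_coe.mpr (Finset.mem_insert_of_mem hpq'))
        have hfx := hxeq p q (Finset.mem_coe.mpr (Finset.mem_insert_of_mem hpq'))
        constructor
        · rintro (⟨v, hv, hd⟩ | hj)
          · exact Or.inl ⟨v, hv, (DepTm.ofEqv hbase).symm.trans hd⟩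
          · exact absurd hj (hnotx p hfx.1)
        · rintro (⟨v, hv, hd⟩ | hj)
          · exact Or.inl ⟨v, hv, (DepTm.ofEqv hbase).trans hd⟩
          · exact absurd hj (hnotx q hfx.2)
    obtain ⟨n, m, h⟩ := hd'
    have key := eqv_invariant h1 h2 h
    rw [phi_sIter h2, phi_sIter h2] at key
    have hΦt : Φ t' := by
      rcases ht' with ⟨b', c', h'⟩ | ⟨b', c', h'⟩ | rfl
      · rcases Finset.mem_insert.mp h' with heq | h'
        · simp at heq
        rcases Finset.mem_insert.mp h' with heq | h'
        · simp at heq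
        rcases Finset.mem_insert.mp h' with heq | h'
        · simp at heq
        rcases Finset.mem_insert.mp h' with heq | h'
        · injection heq with h1' h2' h3'
          rw [h1']
          exact Or.inr ⟨0, rfl⟩
        · exact Or.inl ⟨t', Or.inl ⟨b', c', Finset.mem_insert_of_mem h'⟩, DepTm.refl t'⟩
      · exact Or.inl ⟨t', Or.inr (Or.inl ⟨b', c', h'⟩), DepTm.refl t'⟩
      · exact Or.inl ⟨Tm.zero, Or.inr (Or.inr rfl), DepTm.refl _⟩
    have hΦu : ¬ Φ u' := by
      rcases hu' with ⟨a', c', h'⟩ | ⟨a', c', h'⟩ | ⟨a', c', h'⟩ | ⟨a', c', h'⟩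
      · rcases Finset.mem_insert.mp h' with heq | h'
        · simp at heq
        rcases Finset.mem_insert.mp h' with heq | h'
        · simp at heq
        rcases Finset.mem_insert.mp h' with heq | h'
        · simp at heq
        rcases Finset.mem_insert.mp h' with heq | h'
        · injection heq with h1' h2' h3'
          rw [h2']
          intro hphi
          exact hΦy ((h2 _).mp hphi)
        · exact hBCS u' (Or.inl ⟨a', c', Finset.mem_insert_of_mem h'⟩)
      · rcases Finset.mem_insert.mp h' with heq | h'
        · simp at heq
        rcases Finset.mem_insert.mp h' with heq | h'
        · simp at heq
        rcases Finset.mem_insert.mp h' with heq | h'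
        · simp at heq
        rcases Finset.mem_insert.mp h' with heq | h'
        · injection heq with h1' h2' h3'
          rw [h3']
          exact hΦz
        · exact hBCS u' (Or.inr (Or.inl ⟨a', c', Finset.mem_insert_of_mem h'⟩))
      · exact hBCS u' (Or.inr (Or.inr (Or.inl ⟨a', c', h'⟩)))
      · exact hBCS u' (Or.inr (Or.inr (Or.inr ⟨a', c', h'⟩)))
    exact hΦu (key.mp hΦt)

lemma inv_step {r : Rule} {S : Seq} {prems : List Seq} (hinf : Inf r S prems)
    (hS : InvSeq S)
    (hcut : ∀ φ, r ≠ Rule.cut φ)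
    (heql : ∀ v1 v2 t u, r ≠ Rule.eqL v1 v2 t u) :
    ∀ S' ∈ prems, InvSeq S' := by
  cases hinf with
  | ax h => intro S' h'; simp at h'
  | weak hΓ hΔ =>
    intro S' h'
    simp only [List.mem_singleton] at h'
    subst h'
    exact inv_weak ‹_› ‹_› hS
  | cut => exact absurd rfl (hcut _)
  | subst =>
    intro S' h'
    simp only [List.mem_singleton] at h'
    subst h'
    exact inv_subst hS
  | negL => exact absurd (hS.1 _ (Finset.mem_insert_self _ _)) (by simp [GoodAnt])
  | negR => exact absurd (hS.2.1 _ (Finset.mem_insert_self _ _)) (by simp [GoodSuc])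
  | andL => exact absurd (hS.1 _ (Finset.mem_insert_self _ _)) (by simp [GoodAnt])
  | andR => exact absurd (hS.2.1 _ (Finset.mem_insert_self _ _)) (by simp [GoodSuc])
  | orL => exact absurd (hS.1 _ (Finset.mem_insert_self _ _)) (by simp [GoodAnt])
  | orR => exact absurd (hS.2.1 _ (Finset.mem_insert_self _ _)) (by simp [GoodSuc])
  | impL => exact absurd (hS.1 _ (Finset.mem_insert_self _ _)) (by simp [GoodAnt])
  | impR => exact absurd (hS.2.1 _ (Finset.mem_insert_self _ _)) (by simp [GoodSuc])
  | allL => exact absurd (hS.1 _ (Finset.mem_insert_self _ _)) (by simp [GoodAnt])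
  | allR h => exact absurd (hS.2.1 _ (Finset.mem_insert_self _ _)) (by simp [GoodSuc])
  | exL h => exact absurd (hS.1 _ (Finset.mem_insert_self _ _)) (by simp [GoodAnt])
  | exR => exact absurd (hS.2.1 _ (Finset.mem_insert_self _ _)) (by simp [GoodSuc])
  | eqR => intro S' h'; simp at h'
  | eqL => exact absurd rfl (heql _ _ _ _)
  | eqLa =>
    intro S' h'
    simp only [List.mem_singleton] at h'
    subst h'
    exact inv_eqLa hS
  | add1R1 => intro S' h'; simp at h'
  | add1R2 =>
    intro S' h'
    simp only [List.mem_singleton] at h'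
    subst h'
    exact inv_add1R2 hS
  | add2R1 => intro S' h'; simp at h'
  | add2R2 => exact absurd (hS.2.1 _ (Finset.mem_insert_self _ _)) (by simp [GoodSuc])
  | caseAdd1 hxy hxz hyz hfresh =>
    exact absurd (hS.1 _ (Finset.mem_insert_self _ _)) (by simp [GoodAnt])
  | caseAdd2 hxy hxz hyz hfresh =>
    intro S' h'
    simp only [List.mem_cons, List.not_mem_nil, or_false] at h'
    rcases h' with rfl | rfl
    · exact inv_caseAdd2_left hfresh hS
    · exact inv_caseAdd2_right hxy hxz hfresh hS

/-- In a cut-free cycle-normal `CLKID^ω_a` proof of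
    `Add2(x,y,z) ⊢ Add1(x,y,z)`, for every sequent of the proof, the first
    arguments (and `0`) are `~_Γ`-unrelated to the second and third arguments. -/
theorem abc_relations (P : PreProof) (hP : IsCNProofOfGoal P) :
    ∀ σ S r, P.D.label σ = some (S, r) →
      ∀ t ∈ Aset S, ∀ u ∈ BCset S, ¬ DepTm (antSet S) t u := by
  obtain ⟨hproof, hcf, hnoeql, hcn, r0, hr0⟩ := hP
  suffices H : ∀ σ : List ℕ, ∀ S r, P.D.label σ = some (S, r) → InvSeq S by
    intro σ S r hσ
    exact (H σ S r hσ).2.2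
  intro σ
  induction σ using List.reverseRecOn with
  | nil =>
    intro S r hσ
    rw [hr0] at hσ
    injection hσ with h
    injection h with h1 h2
    subst h1
    exact inv_goal
  | append_singleton l i ih =>
    intro S r hσ
    have hne : P.D.label l ≠ none := P.D.prefix_closed l [i] (by rw [hσ]; simp)
    obtain ⟨p, hl'⟩ := Option.ne_none_iff_exists'.mp hne
    obtain ⟨S', r'⟩ := p
    have hinv' := ih S' r' hl'
    rcases P.D.wf l S' r' hl' with ⟨hb, hnone⟩ | ⟨hnb, prems, hinf, hch⟩
    · rw [hnone i] at hσ
      exact nomatch hσ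
    · by_cases hi : i < prems.length
      · obtain ⟨r'', h''⟩ := hch.1 ⟨i, hi⟩
        rw [hσ] at h''
        injection h'' with h
        injection h with h1 h2
        have hcut : ∀ φ, r' ≠ Rule.cut φ := by
          intro φ hφ
          exact hcf ⟨l, S', r', hl', φ, hφ⟩
        have heql : ∀ v1 v2 t u, r' ≠ Rule.eqL v1 v2 t u := by
          intro v1 v2 t u hφ
          exact hnoeql ⟨l, S', r', hl', v1, v2, t, u, hφ⟩
        have hmem : S ∈ prems := by
          rw [h1]
          exact prems.get_mem ⟨i, hi⟩
        exact inv_step hinf hinv' hcut heql S hmem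
      · rw [hch.2 i (Nat.le_of_not_lt hi)] at hσ
        exact nomatch hσ

end CLKID
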